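/- In a level-1 phylogenetic network N on a finite set X, for every nonempty subset Y of X with unique lowest common ancestor lca(Y) and lowest stable ancestor lsa(Y): either lsa(Y) = lca(Y), or there exists a unique directed path from lsa(Y) to lca(Y), and this path contains no cut arc. -/

import Mathlib

open Relation

/-- A rooted phylogenetic network on a finite taxa set `X` with vertex type `V`:
a finite simple acyclic digraph with a unique root (indegree 0, reaching every
vertex), no vertices with indegree 1 and outdegree 1, whose leaves (outdegree-0
vertices) are bijectively labelled by `X`. -/
structure PhyloNetwork (V X : Type) [Fintype V] [Fintype X] where
  /-- arc relation of the digraph -/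
  Adj : V → V → Prop
  /-- acyclicity: no directed cycle -/
  acyclic : ∀ v, ¬ Relation.TransGen Adj v v
  /-- the root -/
  root : V
  /-- the root has indegree 0 -/
  root_no_parent : ∀ u, ¬ Adj u root
  /-- every vertex is reachable from the root by a directed path -/
  root_reaches : ∀ v, Relation.ReflTransGen Adj root v
  /-- no vertex has indegree 1 and outdegree 1 -/
  no_degenerate : ∀ v, ¬ ({u | Adj u v}.ncard = 1 ∧ {u | Adj v u}.ncard = 1)
  /-- the leaves are bijectively labelled by the taxa in `X` -/
  label : X ≃ {v : V // ∀ u, ¬ Adj v u}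

namespace PhyloNetwork

variable {V X : Type} [Fintype V] [Fintype X] (N : PhyloNetwork V X)

/-- a leaf is a vertex of outdegree 0 -/
def IsLeaf (v : V) : Prop := ∀ u, ¬ N.Adj v u

/-- the leaf labelled by taxon `x` -/
def leaf (x : X) : V := (N.label x).val

/-- `u` is below `v` (equivalently, `v` is above `u`): there is a directed
path from `v` to `u` -/
def below (u v : V) : Prop := Relation.ReflTransGen N.Adj v u

/-- `u` is strictly below `v` -/
def strictlyBelow (u v : V) : Prop := N.below u v ∧ u ≠ v

/-- the cluster of a vertex: the set of taxa labelling the leaves below it -/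
def cluster (v : V) : Set X := {x | N.below (N.leaf x) v}

/-- a common ancestor of a set `Y` of taxa -/
def CommonAncestor (Y : Set X) (v : V) : Prop := Y ⊆ N.cluster v

/-- a lowest common ancestor (LCA) of `Y`: a common ancestor of `Y` such that
no other common ancestor of `Y` is strictly below it -/
def IsLCA (Y : Set X) (v : V) : Prop :=
  N.CommonAncestor Y v ∧ ∀ u, N.CommonAncestor Y u → ¬ N.strictlyBelow u v

/-- `p` is a directed path from `u` to `v`, recorded as its list of vertices -/
def IsDipath (p : List V) (u v : V) : Prop :=
  p ≠ [] ∧ p.head? = some u ∧ p.getLast? = some v ∧ p.Chain' N.Adj ∧ p.Nodup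

/-- the arc `(a, b)` is traversed by the path `p` -/
def ArcIn (p : List V) (a b : V) : Prop := (a, b) ∈ p.zip p.tail

/-- a stable ancestor of `Y`: a vertex contained in every directed path from
the root to some taxon in `Y` -/
def StableAncestor (Y : Set X) (v : V) : Prop :=
  ∀ x ∈ Y, ∀ p : List V, N.IsDipath p N.root (N.leaf x) → v ∈ p

/-- the lowest stable ancestor (LSA) of `Y`: the stable ancestor of `Y`
that is below every stable ancestor of `Y` -/
def IsLSA (Y : Set X) (w : V) : Prop :=
  N.StableAncestor Y w ∧ ∀ v, N.StableAncestor Y v → N.below w v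

/-- the underlying undirected graph of the network -/
def underlying : SimpleGraph V := SimpleGraph.fromRel N.Adj

/-- indegree of a vertex -/
noncomputable def inDeg (v : V) : ℕ := {u | N.Adj u v}.ncard

/-- outdegree of a vertex -/
noncomputable def outDeg (v : V) : ℕ := {u | N.Adj v u}.ncard

/-- binary network: every non-leaf vertex has indegree at most 2 and
outdegree at most 2, and every vertex of indegree 2 has outdegree 1 -/
def Binary : Prop :=
  (∀ v, ¬ N.IsLeaf v → N.inDeg v ≤ 2 ∧ N.outDeg v ≤ 2) ∧
  (∀ v, N.inDeg v = 2 → N.outDeg v = 1)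

/-- level-1 network: binary, and any two cycles of the underlying undirected
graph are vertex-disjoint (i.e. any two cycles sharing a vertex have the same
vertex set) -/
def Level1 : Prop :=
  N.Binary ∧ ∀ (u v : V) (c₁ : N.underlying.Walk u u) (c₂ : N.underlying.Walk v v),
    c₁.IsCycle → c₂.IsCycle → ∀ w, w ∈ c₁.support → w ∈ c₂.support →
      ∀ z, (z ∈ c₁.support ↔ z ∈ c₂.support)

/-- a cut arc: an arc whose removal disconnects the underlying undirected graph -/
def CutArc (a b : V) : Prop :=
  N.Adj a b ∧ ¬ (SimpleGraph.fromRel (fun u v => N.Adj u v ∧ ¬ (u = a ∧ v = b))).Connected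

/-- a splitting ancestor of distinct taxa `x` and `y`: a (non-leaf) vertex such
that precisely one taxon from `{x, y}` is below both of its children, while the
other taxon is below exactly one of its two children -/
def SplittingAncestor (x y : X) (v : V) : Prop :=
  ∃ c₁ c₂, c₁ ≠ c₂ ∧ N.Adj v c₁ ∧ N.Adj v c₂ ∧
    ((N.below (N.leaf x) c₁ ∧ N.below (N.leaf x) c₂ ∧
        Xor' (N.below (N.leaf y) c₁) (N.below (N.leaf y) c₂)) ∨
     (N.below (N.leaf y) c₁ ∧ N.below (N.leaf y) c₂ ∧
        Xor' (N.below (N.leaf x) c₁) (N.below (N.leaf x) c₂)))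

/-- saturated level-1 network: each non-leaf vertex is contained in a cycle of
size three of the underlying undirected graph -/
def Saturated : Prop :=
  ∀ v, ¬ N.IsLeaf v → ∃ c : N.underlying.Walk v v, c.IsCycle ∧ c.length = 3

/-- the multiset of clusters induced by the vertices of the network -/
noncomputable def clusterMultiset : Multiset (Set X) :=
  (Finset.univ : Finset V).val.map N.cluster

/-- the Robinson–Foulds distance: the size of the symmetric difference of the
multisets of clusters of the two networks -/
noncomputable def rfDist {V V' X : Type} [Fintype V] [Fintype V'] [Fintype X]
    (N : PhyloNetwork V X) (N' : PhyloNetwork V' X) : ℕ :=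
  letI : DecidableEq (Set X) := Classical.decEq _
  ((N.clusterMultiset - N'.clusterMultiset) +
    (N'.clusterMultiset - N.clusterMultiset)).card

end PhyloNetwork

section AuxRel
variable {V : Type} {r : V → V → Prop}

lemma aux_tg_of_rtg_ne {a b : V} (h : ReflTransGen r a b) (hne : b ≠ a) : TransGen r a b := by
  rcases Relation.reflTransGen_iff_eq_or_transGen.mp h with h' | h'
  · exact absurd h' hne
  · exact h'

lemma aux_no2 (hac : ∀ v, ¬ TransGen r v v) {a b : V} (h1 : ReflTransGen r a b)
    (h2 : ReflTransGen r b a) (hne : a ≠ b) : False :=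
  hac a ((aux_tg_of_rtg_ne h1 (Ne.symm hne)).trans_left h2)

lemma aux_chain_tg : ∀ {xs : List V} {x : V}, List.Chain' r (x :: xs) → ∀ v ∈ xs, TransGen r x v := by
  intro xs
  induction xs with
  | nil => intro x _ v hv; simp at hv
  | cons y ys ih =>
    intro x hc v hv
    simp only [List.Chain', List.isChain_cons_cons] at hc
    rcases List.mem_cons.mp hv with rfl | hv
    · exact TransGen.single hc.1
    · exact TransGen.head hc.1 (ih hc.2 v hv)

lemma aux_head_eq {l : List V} {x : V} (h : l.head? = some x) : ∃ t, l = x :: t := by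
  cases l with
  | nil => simp at h
  | cons a t =>
    refine ⟨t, ?_⟩
    injection h with h
    rw [h]

lemma aux_mem_getLast? {l : List V} {y : V} (h : l.getLast? = some y) : y ∈ l := by
  cases l with
  | nil => simp at h
  | cons a t =>
    have hne : a :: t ≠ [] := by simp
    rw [List.getLast?_eq_getLast_of_ne_nil hne] at h
    injection h with h
    rw [← h]
    exact List.getLast_mem hne

lemma aux_chain_head {l : List V} {x : V} (hc : List.Chain' r l) (hx : l.head? = some x) :
    ∀ v ∈ l, ReflTransGen r x v := by
  obtain ⟨t, rfl⟩ := aux_head_eq hx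
  intro v hv
  rcases List.mem_cons.mp hv with rfl | hv
  · exact ReflTransGen.refl
  · exact (aux_chain_tg hc v hv).to_reflTransGen

lemma aux_chain_last {l : List V} {y : V} (hc : List.Chain' r l) (hy : l.getLast? = some y) :
    ∀ v ∈ l, ReflTransGen r v y := by
  intro v hv
  obtain ⟨s, t, rfl⟩ := List.append_of_mem hv
  have hsuf : (v :: t).Chain' r := hc.suffix ⟨s, rfl⟩
  have hlast : (v :: t).getLast? = some y := by
    rw [← hy, List.getLast?_append_of_ne_nil _ (by simp)]
  exact aux_chain_head hsuf rfl y (aux_mem_getLast? hlast)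

lemma aux_chain_nodup (hac : ∀ v, ¬ TransGen r v v) : ∀ {l : List V}, List.Chain' r l → l.Nodup := by
  intro l
  induction l with
  | nil => intro _; simp
  | cons x xs ih =>
    intro hc
    refine List.nodup_cons.mpr ⟨fun hx => hac x (aux_chain_tg hc x hx), ih hc.tail⟩

lemma aux_chain_zip : ∀ {l : List V}, List.Chain' r l → ∀ a b : V, (a, b) ∈ l.zip l.tail → r a b := by
  intro l
  induction l with
  | nil => intro _ a b h; simp at h
  | cons x xs ih =>
    intro hc a b h
    cases xs with
    | nil => simp at h
    | cons y ys =>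
      simp only [List.Chain', List.isChain_cons_cons] at hc
      rcases List.mem_cons.mp h with h | h
      · obtain ⟨rfl, rfl⟩ := Prod.mk.injEq .. |>.mp h
        exact hc.1
      · exact ih hc.2 a b h
def DP (r : V → V → Prop) (p : List V) (u v : V) : Prop :=
  p ≠ [] ∧ p.head? = some u ∧ p.getLast? = some v ∧ p.Chain' r ∧ p.Nodup

lemma DP.ne {p : List V} {u v : V} (h : DP r p u v) : p ≠ [] := h.1
lemma DP.head {p : List V} {u v : V} (h : DP r p u v) : p.head? = some u := h.2.1
lemma DP.last {p : List V} {u v : V} (h : DP r p u v) : p.getLast? = some v := h.2.2.1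
lemma DP.chain {p : List V} {u v : V} (h : DP r p u v) : p.Chain' r := h.2.2.2.1
lemma DP.nodup {p : List V} {u v : V} (h : DP r p u v) : p.Nodup := h.2.2.2.2

lemma DP.start_mem {p : List V} {u v : V} (h : DP r p u v) : u ∈ p := by
  obtain ⟨t, rfl⟩ := aux_head_eq h.head; simp
lemma DP.end_mem {p : List V} {u v : V} (h : DP r p u v) : v ∈ p := aux_mem_getLast? h.last

lemma DP.mem_reaches {p : List V} {u v z : V} (h : DP r p u v) (hz : z ∈ p) :
    ReflTransGen r u z ∧ ReflTransGen r z v :=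
  ⟨aux_chain_head h.chain h.head z hz, aux_chain_last h.chain h.last z hz⟩

lemma exists_DP (hac : ∀ v, ¬ TransGen r v v) {s t : V} (h : ReflTransGen r s t) :
    ∃ p, DP r p s t := by
  induction h using ReflTransGen.head_induction_on with
  | refl => exact ⟨[t], by simp [DP]; exact List.isChain_singleton _⟩
  | head hab _ ih =>
    rename_i a c _
    obtain ⟨p, hp⟩ := ih
    obtain ⟨q, rfl⟩ := aux_head_eq hp.head
    refine ⟨a :: c :: q, ?_, rfl, ?_, ?_, ?_⟩
    · simp
    · rw [List.getLast?_cons_cons]; exact hp.last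
    · exact List.isChain_cons_cons.mpr ⟨hab, hp.chain⟩
    · refine List.nodup_cons.mpr ⟨fun ha => ?_, hp.nodup⟩
      exact hac a (TransGen.head' hab ((hp.mem_reaches ha).1))

lemma DP.append (hac : ∀ v, ¬ TransGen r v v) {p₁ p₂ : List V} {s m t : V}
    (h₁ : DP r p₁ s m) (h₂ : DP r p₂ m t) :
    DP r (p₁ ++ p₂.tail) s t ∧ (∀ z, z ∈ p₁ ++ p₂.tail ↔ z ∈ p₁ ∨ z ∈ p₂) := by
  obtain ⟨q, rfl⟩ := aux_head_eq h₂.head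
  cases q with
  | nil =>
    obtain rfl : m = t := by simpa using h₂.last
    refine ⟨by simpa using h₁, fun z => ?_⟩
    simp only [List.tail_cons, List.append_nil]
    constructor
    · exact fun h => Or.inl h
    · rintro (h | h)
      · exact h
      · simp at h; subst h; exact h₁.end_mem
  | cons y q' =>
    obtain ⟨p₁', rfl⟩ := aux_head_eq h₁.head
    have hchain2 := List.isChain_cons_cons.mp h₂.chain
    have hdisj : ∀ z ∈ s :: p₁', z ∈ y :: q' → False := by
      intro z hz1 hz2
      have hz2' : z ∈ m :: y :: q' := List.mem_cons_of_mem _ hz2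
      have h1 := (h₁.mem_reaches hz1).2
      have h2 := (h₂.mem_reaches hz2').1
      have hzm : z ≠ m := by
        rintro rfl
        exact (List.nodup_cons.mp h₂.nodup).1 hz2
      exact aux_no2 hac h2 h1 (Ne.symm hzm)
    refine ⟨⟨by simp, by simp, ?_, ?_, ?_⟩, fun z => ?_⟩
    · rw [List.tail_cons, List.getLast?_append_of_ne_nil _ (by simp)]
      rw [← List.getLast?_cons_cons (a := m)]
      exact h₂.last
    · rw [List.tail_cons]
      refine List.IsChain.append h₁.chain hchain2.2 ?_
      intro z hz y' hy'
      have hzm : z = m := by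
        have h' := h₁.last
        rw [Option.mem_def] at hz
        rw [hz] at h'
        injection h' with h'
      have hy'y : y' = y := by have := hy'; simp [Option.mem_def] at this; exact this.symm
      subst hzm
      subst hy'y
      exact hchain2.1
    · rw [List.tail_cons]
      refine List.nodup_append.mpr ⟨h₁.nodup, hchain2.2 |> aux_chain_nodup hac, ?_⟩
      intro z hz1 z' hz2 hzz
      subst hzz
      exact hdisj z hz1 hz2
    · rw [List.tail_cons]
      simp only [List.mem_append, List.mem_cons]
      constructor
      · rintro (h | h)
        · exact Or.inl h
        · exact Or.inr (Or.inr h)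
      · rintro (h | h | h)
        · exact Or.inl h
        · subst h; exact Or.inl (List.mem_cons.mp h₁.end_mem)
        · exact Or.inr h

lemma DP.suffix_from {p : List V} {s t z : V} (h : DP r p s t) (hz : z ∈ p) :
    ∃ q, DP r q z t ∧ ∀ y ∈ q, y ∈ p := by
  obtain ⟨l₁, l₂, rfl⟩ := List.append_of_mem hz
  refine ⟨z :: l₂, ⟨by simp, rfl, ?_, ?_, ?_⟩, ?_⟩
  · rw [← h.last, List.getLast?_append_of_ne_nil _ (by simp)]
  · exact h.chain.suffix ⟨l₁, rfl⟩
  · exact h.nodup.sublist ((List.suffix_append l₁ (z :: l₂)).sublist)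
  · intro y hy
    exact List.mem_append.mpr (Or.inr hy)

lemma aux_first_split {P : V → Prop} :
    ∀ {l : List V}, (∃ x ∈ l, P x) → ∃ l₁ a l₂, l = l₁ ++ a :: l₂ ∧ P a ∧ ∀ x ∈ l₁, ¬ P x := by
  intro l
  induction l with
  | nil => rintro ⟨x, hx, -⟩; simp at hx
  | cons y ys ih =>
    intro hex
    by_cases hy : P y
    · exact ⟨[], y, ys, by simp, hy, by simp⟩
    · obtain ⟨x, hx, hPx⟩ := hex
      have hx' : x ∈ ys := by
        rcases List.mem_cons.mp hx with rfl | h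
        · exact absurd hPx hy
        · exact h
      obtain ⟨l₁, a, l₂, rfl, hPa, hl₁⟩ := ih ⟨x, hx', hPx⟩
      refine ⟨y :: l₁, a, l₂, by simp, hPa, ?_⟩
      intro x' hx'
      rcases List.mem_cons.mp hx' with rfl | h
      · exact hy
      · exact hl₁ x' h

lemma aux_last_split {P : V → Prop} :
    ∀ {l : List V}, (∃ x ∈ l, P x) → ∃ l₁ a l₂, l = l₁ ++ a :: l₂ ∧ P a ∧ ∀ x ∈ l₂, ¬ P x := by
  intro l
  induction l with
  | nil => rintro ⟨x, hx, -⟩; simp at hx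
  | cons y ys ih =>
    intro hex
    by_cases hys : ∃ x ∈ ys, P x
    · obtain ⟨l₁, a, l₂, heq, hPa, hl₂⟩ := ih hys
      exact ⟨y :: l₁, a, l₂, by rw [heq]; simp, hPa, hl₂⟩
    · push_neg at hys
      obtain ⟨x, hx, hPx⟩ := hex
      obtain rfl : x = y := by
        rcases List.mem_cons.mp hx with rfl | h
        · rfl
        · exact absurd hPx (hys x h)
      exact ⟨[], x, ys, by simp, hPx, hys⟩

lemma aux_pair_zip {l : List V} {a b : V} (hn : l.Nodup) (hh : l.head? = some a)
    (hl : l.getLast? = some b) (hz : (a, b) ∈ l.zip l.tail) : l = [a, b] := by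
  obtain ⟨l₁, rfl⟩ := aux_head_eq hh
  cases l₁ with
  | nil => simp at hz
  | cons h t =>
    simp only [List.tail_cons, List.zip_cons_cons] at hz
    rcases List.mem_cons.mp hz with heq | hmem
    · have hbh : b = h := ((Prod.mk.injEq .. ).mp heq).2
      subst hbh
      cases t with
      | nil => rfl
      | cons c t' =>
        exfalso
        have hb : b ∈ c :: t' := by
          have : (c :: t').getLast? = some b := by
            rw [← hl]
            rw [List.getLast?_cons_cons, List.getLast?_cons_cons]
          exact aux_mem_getLast? this
        have := List.nodup_cons.mp ((List.nodup_cons.mp hn).2)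
        exact this.1 hb
    · exfalso
      have := (List.of_mem_zip hmem).1
      exact (List.nodup_cons.mp hn).1 this

lemma DP_ext (hac : ∀ v, ¬ TransGen r v v) :
    ∀ {p : List V} {q : List V} {s t : V}, DP r p s t → DP r q s t →
      (∀ v, v ∈ p ↔ v ∈ q) → p = q := by
  intro p
  induction p with
  | nil => intro q s t hp _ _; exact absurd rfl hp.ne
  | cons s' p' ih =>
    intro q s t hp hq hmem
    obtain rfl : s = s' := by have h := hp.head; injection h with h; exact h.symm
    obtain ⟨q', rfl⟩ := aux_head_eq hq.head
    have hsp' : s ∉ p' := (List.nodup_cons.mp hp.nodup).1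
    have hsq' : s ∉ q' := (List.nodup_cons.mp hq.nodup).1
    cases p' with
    | nil =>
      obtain rfl : s = t := by simpa using hp.last
      cases q' with
      | nil => rfl
      | cons h₂ q'' =>
        exfalso
        have : h₂ ∈ [s] := (hmem h₂).mpr (by simp)
        simp at this
        exact hsq' (this ▸ List.mem_cons_self (a := h₂) (l := q''))
    | cons h₁ p'' =>
      cases q' with
      | nil =>
        exfalso
        have : h₁ ∈ [s] := (hmem h₁).mp (by simp)
        simp at this
        exact hsp' (this ▸ List.mem_cons_self (a := h₁) (l := p''))
      | cons h₂ q'' =>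
        have hh₁q : h₁ ∈ h₂ :: q'' := by
          have := (hmem h₁).mp (by simp)
          rcases List.mem_cons.mp this with heq | h
          · exact absurd (heq ▸ List.mem_cons_self (a := h₁) (l := p'')) hsp'
          · exact h
        have hh₂p : h₂ ∈ h₁ :: p'' := by
          have := (hmem h₂).mpr (by simp)
          rcases List.mem_cons.mp this with heq | h
          · exact absurd (heq ▸ List.mem_cons_self (a := h₂) (l := q'')) hsq'
          · exact h
        have hcp : List.Chain' r (h₁ :: p'') := (List.isChain_cons_cons.mp hp.chain).2
        have hcq : List.Chain' r (h₂ :: q'') := (List.isChain_cons_cons.mp hq.chain).2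
        obtain rfl : h₁ = h₂ := by
          by_contra hne
          exact aux_no2 hac (aux_chain_head hcp rfl h₂ hh₂p)
            (aux_chain_head hcq rfl h₁ hh₁q) hne
        have hp' : DP r (h₁ :: p'') h₁ t :=
          ⟨by simp, rfl, by rw [← hp.last, List.getLast?_cons_cons], hcp,
            (List.nodup_cons.mp hp.nodup).2⟩
        have hq' : DP r (h₁ :: q'') h₁ t :=
          ⟨by simp, rfl, by rw [← hq.last, List.getLast?_cons_cons], hcq,
            (List.nodup_cons.mp hq.nodup).2⟩
        have : h₁ :: p'' = h₁ :: q'' := by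
          refine ih hp' hq' fun v => ⟨fun hv => ?_, fun hv => ?_⟩
          · have := (hmem v).mp (List.mem_cons_of_mem _ hv)
            rcases List.mem_cons.mp this with rfl | h
            · exact absurd hv hsp'
            · exact h
          · have := (hmem v).mpr (List.mem_cons_of_mem _ hv)
            rcases List.mem_cons.mp this with rfl | h
            · exact absurd hv hsq'
            · exact h
        rw [this]

lemma aux_chain_imp {r' : V → V → Prop} :
    ∀ {l : List V}, l.Chain' r → (∀ x y, r x y → y ∈ l.tail → r' x y) → l.Chain' r' := by
  intro l
  induction l with
  | nil => intro _ _; exact List.isChain_nil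
  | cons x xs ih =>
    intro hc himp
    cases xs with
    | nil => exact List.isChain_singleton _
    | cons y ys =>
      simp only [List.Chain', List.isChain_cons_cons] at hc ⊢
      refine ⟨himp x y hc.1 (by simp), ih hc.2 ?_⟩
      intro x' y' hr hy'
      exact himp x' y' hr (List.mem_cons_of_mem _ hy')

end AuxRel

section NetLemmas
open List PhyloNetwork SimpleGraph
variable {V X : Type} [Fintype V] [Fintype X] (N : PhyloNetwork V X)

lemma dipath_eq_DP (p : List V) (u v : V) : N.IsDipath p u v ↔ DP N.Adj p u v := Iff.rfl

lemma walk_of_chain :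
    ∀ (l : List V) (x y : V), l.head? = some x → l.getLast? = some y → l.Chain' N.Adj →
    ∃ wk : N.underlying.Walk x y, wk.support = l ∧
      wk.edges = (l.zip l.tail).map (fun p => Sym2.mk p.1 p.2) := by
  intro l
  induction l with
  | nil => intro x y h _ _; simp at h
  | cons a l ih =>
    intro x y hx hy hc
    obtain rfl : a = x := by injection hx
    cases l with
    | nil =>
      obtain rfl : a = y := by simpa using hy
      exact ⟨SimpleGraph.Walk.nil, by simp, by simp⟩
    | cons b l' =>
      have hadj : N.Adj a b := (List.isChain_cons_cons.mp hc).1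
      have hne : a ≠ b := fun h => N.acyclic a (h ▸ TransGen.single (h ▸ hadj))
      have hgadj : N.underlying.Adj a b :=
        (SimpleGraph.fromRel_adj N.Adj a b).mpr ⟨hne, Or.inl hadj⟩
      obtain ⟨wk, hs, he⟩ := ih b y rfl (by rw [← hy, List.getLast?_cons_cons])
        (List.isChain_cons_cons.mp hc).2
      refine ⟨SimpleGraph.Walk.cons hgadj wk, ?_, ?_⟩
      · simp [hs]
      · simp [he]
lemma make_cycle {A B : List V} {a b : V}
    (hA : DP N.Adj A a b) (hB : DP N.Adj B a b) (hab : a ≠ b)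
    (hdisj : ∀ v ∈ A, v ∈ B → v = a ∨ v = b) (hAB : A ≠ B) :
    ∃ c : N.underlying.Walk a a, c.IsCycle ∧ ∀ z, z ∈ c.support ↔ (z ∈ A ∨ z ∈ B) := by
  obtain ⟨wkA, hsA, heA⟩ := walk_of_chain N A a b hA.head hA.last hA.chain
  obtain ⟨wkB, hsB, heB⟩ := walk_of_chain N B a b hB.head hB.last hB.chain
  obtain ⟨A₁, hAeq⟩ := aux_head_eq hA.head
  obtain ⟨B₁, hBeq⟩ := aux_head_eq hB.head
  have haA₁ : a ∉ A₁ := by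
    have h := hA.nodup; rw [hAeq] at h; exact (List.nodup_cons.mp h).1
  have haB₁ : a ∉ B₁ := by
    have h := hB.nodup; rw [hBeq] at h; exact (List.nodup_cons.mp h).1
  have hB₁ne : B₁ ≠ [] := by
    rintro rfl
    have h := hB.last; rw [hBeq] at h
    exact hab (by simpa using h)
  have hB₁last : B₁.getLast? = some b := by
    have h := hB.last; rw [hBeq] at h
    cases B₁ with
    | nil => exact absurd rfl hB₁ne
    | cons u l => rw [← h, List.getLast?_cons_cons]
  obtain ⟨B₃, hB₃⟩ := aux_head_eq (l := B₁.reverse) (by rw [List.head?_reverse]; exact hB₁last)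
  have hrevB : B.reverse = b :: (B₃ ++ [a]) := by
    rw [hBeq, List.reverse_cons, hB₃]; simp
  have hnodBrev : (b :: (B₃ ++ [a])).Nodup := by
    rw [← hrevB]; exact List.nodup_reverse.mpr hB.nodup
  have hbB₃ : b ∉ B₃ :=
    fun hb => (List.nodup_cons.mp hnodBrev).1 (List.mem_append.mpr (Or.inl hb))
  have haB₃ : a ∉ B₃ := by
    intro ha
    have h := (List.nodup_cons.mp hnodBrev).2
    exact (List.disjoint_of_nodup_append h) ha (by simp)
  have hB₃nod : B₃.Nodup := by
    have h := (List.nodup_cons.mp hnodBrev).2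
    exact (List.nodup_append.mp h).1
  have hA₁nod : A₁.Nodup := by
    have h := hA.nodup; rw [hAeq] at h; exact (List.nodup_cons.mp h).2
  have hbA : b ∈ A := hA.end_mem
  have hbA₁ : b ∈ A₁ := by
    have hb' : b ∈ a :: A₁ := by rw [← hAeq]; exact hbA
    rcases List.mem_cons.mp hb' with h | h
    · exact absurd h.symm hab
    · exact h
  have hmemBiff : ∀ z, z ∈ B ↔ (z = a ∨ z = b ∨ z ∈ B₃) := by
    intro z
    rw [← List.mem_reverse, hrevB]
    simp only [List.mem_cons, List.mem_append, List.mem_singleton]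
    tauto
  have hsupp : (wkA.append wkB.reverse).support = (a :: A₁) ++ (B₃ ++ [a]) := by
    rw [SimpleGraph.Walk.support_append, SimpleGraph.Walk.support_reverse, hsA, hsB, hrevB,
      List.tail_cons, hAeq]
  have hedges : (wkA.append wkB.reverse).edges = wkA.edges ++ wkB.edges.reverse := by
    rw [SimpleGraph.Walk.edges_append, SimpleGraph.Walk.edges_reverse]
  refine ⟨wkA.append wkB.reverse, ⟨⟨⟨?_⟩, ?_⟩, ?_⟩, ?_⟩
  · -- edges nodup
    rw [hedges]
    refine List.nodup_append.mpr ⟨?_, ?_, ?_⟩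
    · exact SimpleGraph.Walk.edges_nodup_of_support_nodup (by rw [hsA]; exact hA.nodup)
    · exact List.nodup_reverse.mpr
        (SimpleGraph.Walk.edges_nodup_of_support_nodup (by rw [hsB]; exact hB.nodup))
    · intro e heA' e' heB' hee
      subst hee
      rw [List.mem_reverse] at heB'
      rw [heA] at heA'
      rw [heB] at heB'
      obtain ⟨⟨x, y⟩, hxy, rfl⟩ := List.mem_map.mp heA'
      obtain ⟨⟨x₂, y₂⟩, hxy₂, heq⟩ := List.mem_map.mp heB'
      have hxA : x ∈ A := (List.of_mem_zip hxy).1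
      have hyA : y ∈ A := List.mem_of_mem_tail (List.of_mem_zip hxy).2
      have hx₂B : x₂ ∈ B := (List.of_mem_zip hxy₂).1
      have hy₂B : y₂ ∈ B := List.mem_of_mem_tail (List.of_mem_zip hxy₂).2
      have hrxy : N.Adj x y := aux_chain_zip hA.chain x y hxy
      have hxyne : x ≠ y := fun h => N.acyclic x (h ▸ TransGen.single (h ▸ hrxy))
      have hcases : (x₂ = x ∧ y₂ = y) ∨ (x₂ = y ∧ y₂ = x) := Sym2.eq_iff.mp heq
      have hxB : x ∈ B := by
        rcases hcases with ⟨h1, h2⟩ | ⟨h1, h2⟩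
        · exact h1 ▸ hx₂B
        · exact h2 ▸ hy₂B
      have hyB : y ∈ B := by
        rcases hcases with ⟨h1, h2⟩ | ⟨h1, h2⟩
        · exact h2 ▸ hy₂B
        · exact h1 ▸ hx₂B
      have hxab := hdisj x hxA hxB
      have hyab := hdisj y hyA hyB
      have hxa : x = a ∧ y = b := by
        rcases hxab with rfl | rfl
        · rcases hyab with rfl | rfl
          · exact absurd rfl hxyne
          · exact ⟨rfl, rfl⟩
        · exfalso
          rcases hyab with rfl | rfl
          · -- (b, a) ∈ zip A A.tail : a ∈ A.tail
            have := (List.of_mem_zip hxy).2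
            rw [hAeq, List.tail_cons] at this
            exact haA₁ this
          · exact hxyne rfl
      obtain ⟨rfl, rfl⟩ := hxa
      have hAab : A = [x, y] := aux_pair_zip hA.nodup hA.head hA.last hxy
      have hx₂y₂ : x₂ = x ∧ y₂ = y := by
        rcases hcases with ⟨h1, h2⟩ | ⟨h1, h2⟩
        · exact ⟨h1, h2⟩
        · exfalso
          -- (x₂, y₂) = (y, x) = (b, a) : a ∈ B.tail
          have := (List.of_mem_zip hxy₂).2
          rw [h2] at this
          rw [hBeq, List.tail_cons] at this
          exact haB₁ this
      obtain ⟨rfl, rfl⟩ := hx₂y₂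
      have hBab : B = [x₂, y₂] := aux_pair_zip hB.nodup hB.head hB.last hxy₂
      exact hAB (hAab.trans hBab.symm)
  · -- nonempty
    intro hnil
    have h := hsupp
    rw [hnil, SimpleGraph.Walk.support_nil] at h
    have := congrArg List.length h
    simp at this
  · -- support tail nodup
    rw [hsupp, List.cons_append, List.tail_cons]
    refine List.nodup_append.mpr ⟨hA₁nod, ?_, ?_⟩
    · refine List.nodup_append.mpr ⟨hB₃nod, List.nodup_singleton a, ?_⟩
      intro z hz1 z' hz2 hzz
      subst hzz
      rw [List.mem_singleton] at hz2
      exact haB₃ (hz2 ▸ hz1)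
    · intro z hz1 z' hz2 hzz
      subst hzz
      rcases List.mem_append.mp hz2 with hz2 | hz2
      · have hzA : z ∈ A := by rw [hAeq]; exact List.mem_cons_of_mem _ hz1
        have hzB : z ∈ B := (hmemBiff z).mpr (Or.inr (Or.inr hz2))
        rcases hdisj z hzA hzB with rfl | rfl
        · exact haA₁ hz1
        · exact hbB₃ hz2
      · rw [List.mem_singleton] at hz2
        exact haA₁ (hz2 ▸ hz1)
  · -- support membership
    intro z
    rw [hsupp]
    simp only [List.cons_append, List.mem_cons, List.mem_append, List.mem_singleton]
    constructor
    · rintro (rfl | hz | hz | rfl | h)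
      · exact Or.inl (by rw [hAeq]; simp)
      · exact Or.inl (by rw [hAeq]; simp [hz])
      · exact Or.inr ((hmemBiff z).mpr (Or.inr (Or.inr hz)))
      · exact Or.inl (by rw [hAeq]; simp)
      · exact absurd h List.not_mem_nil
    · rintro (hz | hz)
      · rw [hAeq, List.mem_cons] at hz
        rcases hz with rfl | hz
        · exact Or.inl rfl
        · exact Or.inr (Or.inl hz)
      · rcases (hmemBiff z).mp hz with rfl | rfl | hz
        · exact Or.inl rfl
        · exact Or.inr (Or.inl hbA₁)
        · exact Or.inr (Or.inr (Or.inl hz))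

lemma extract {P Q : List V} {s t v₀ : V}
    (hP : DP N.Adj P s t) (hQ : DP N.Adj Q s t) (hv0 : v₀ ∈ P) (hv0Q : v₀ ∉ Q) :
    ∃ a' b' A B, DP N.Adj A a' b' ∧ DP N.Adj B a' b' ∧ a' ≠ b' ∧
      (∀ v ∈ A, v ∈ B → v = a' ∨ v = b') ∧ A ≠ B ∧ v₀ ∈ A ∧
      (∀ v ∈ A, v ∈ P) ∧ (∀ v ∈ B, v ∈ Q) := by
  have hac := N.acyclic
  obtain ⟨P₁, P₂, hPeq⟩ := List.append_of_mem hv0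
  have hsQ : s ∈ Q := hQ.start_mem
  have htQ : t ∈ Q := hQ.end_mem
  have hP₁ne : P₁ ≠ [] := by
    rintro rfl
    have h := hP.head; rw [hPeq] at h
    have hv : v₀ = s := by simpa using h
    exact hv0Q (hv ▸ hsQ)
  have hsP₁ : s ∈ P₁ := by
    cases P₁ with
    | nil => exact absurd rfl hP₁ne
    | cons p ps =>
      have h := hP.head; rw [hPeq] at h
      have hps : p = s := by simpa using h
      simp [hps]
  have hP₂ne : P₂ ≠ [] := by
    rintro rfl
    have h := hP.last; rw [hPeq, List.getLast?_concat] at h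
    have hv : v₀ = t := by simpa using h
    exact hv0Q (hv ▸ htQ)
  have htP₂ : t ∈ P₂ := by
    have h := hP.last
    rw [hPeq, List.getLast?_append_of_ne_nil _ (List.cons_ne_nil v₀ P₂)] at h
    cases P₂ with
    | nil => exact absurd rfl hP₂ne
    | cons q qs =>
      rw [List.getLast?_cons_cons] at h
      exact aux_mem_getLast? h
  obtain ⟨R₁, a', R₂, hP₁eq, ha'Q, hR₂⟩ := aux_last_split (P := fun z => z ∈ Q) ⟨s, hsP₁, hsQ⟩
  obtain ⟨S₁, b', S₂, hP₂eq, hb'Q, hS₁⟩ := aux_first_split (P := fun z => z ∈ Q) ⟨t, htP₂, htQ⟩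
  set A : List V := a' :: (R₂ ++ v₀ :: (S₁ ++ [b'])) with hAdef
  have hPA : P = R₁ ++ A ++ S₂ := by
    rw [hPeq, hP₁eq, hP₂eq, hAdef]
    simp
  have hAinfix : A <:+: P := ⟨R₁, S₂, hPA.symm⟩
  have hAsub : ∀ v ∈ A, v ∈ P := fun v hv => hAinfix.sublist.subset hv
  have hA : DP N.Adj A a' b' := by
    refine ⟨by simp [hAdef], by simp [hAdef], ?_, hP.chain.infix hAinfix,
      hP.nodup.sublist hAinfix.sublist⟩
    rw [hAdef, show a' :: (R₂ ++ v₀ :: (S₁ ++ [b'])) = (a' :: R₂ ++ v₀ :: S₁) ++ [b'] by simp]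
    exact List.getLast?_concat
  have hv0A : v₀ ∈ A := by simp [hAdef]
  have hAinternal : ∀ v ∈ A, v ≠ a' → v ≠ b' → v ∉ Q := by
    intro v hv hva hvb
    rw [hAdef] at hv
    rcases List.mem_cons.mp hv with rfl | hv
    · exact absurd rfl hva
    rcases List.mem_append.mp hv with hv | hv
    · exact hR₂ v hv
    rcases List.mem_cons.mp hv with rfl | hv
    · exact hv0Q
    rcases List.mem_append.mp hv with hv | hv
    · exact hS₁ v hv
    · rw [List.mem_singleton] at hv; exact absurd hv hvb
  have hab : a' ≠ b' := by
    intro h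
    have hnd := hA.nodup
    rw [hAdef] at hnd
    have hmem : b' ∈ R₂ ++ v₀ :: (S₁ ++ [b']) := by simp
    exact (List.nodup_cons.mp hnd).1 (h ▸ hmem)
  have htg : TransGen N.Adj a' b' := by
    have hmem : b' ∈ R₂ ++ v₀ :: (S₁ ++ [b']) := by simp
    have hchA := hA.chain
    rw [hAdef] at hchA
    exact aux_chain_tg hchA b' hmem
  obtain ⟨Q₁, Q₂, hQeq⟩ := List.append_of_mem ha'Q
  have hb'Q₂ : b' ∈ Q₂ := by
    have hb' := hb'Q
    rw [hQeq] at hb'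
    rcases List.mem_append.mp hb' with h | h
    · exfalso
      have hpre : (Q₁ ++ [a']).Chain' N.Adj :=
        hQ.chain.prefix (by rw [hQeq]; exact ⟨Q₂, by simp⟩)
      have hrba : ReflTransGen N.Adj b' a' :=
        aux_chain_last hpre (List.getLast?_concat) b' (List.mem_append.mpr (Or.inl h))
      exact hac a' (htg.trans_left hrba)
    · rcases List.mem_cons.mp h with h | h
      · exact absurd h.symm hab
      · exact h
  obtain ⟨T₁, T₂, hQ₂eq⟩ := List.append_of_mem hb'Q₂
  set B : List V := a' :: (T₁ ++ [b']) with hBdef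
  have hQB : Q = Q₁ ++ B ++ T₂ := by rw [hQeq, hQ₂eq, hBdef]; simp
  have hBinfix : B <:+: Q := ⟨Q₁, T₂, hQB.symm⟩
  have hBsub : ∀ v ∈ B, v ∈ Q := fun v hv => hBinfix.sublist.subset hv
  have hB : DP N.Adj B a' b' := by
    refine ⟨by simp [hBdef], by simp [hBdef], ?_, hQ.chain.infix hBinfix,
      hQ.nodup.sublist hBinfix.sublist⟩
    rw [hBdef, show a' :: (T₁ ++ [b']) = (a' :: T₁) ++ [b'] by simp]
    exact List.getLast?_concat
  have hdisj : ∀ v ∈ A, v ∈ B → v = a' ∨ v = b' := by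
    intro v hvA hvB
    by_contra hcon
    push_neg at hcon
    exact hAinternal v hvA hcon.1 hcon.2 (hBsub v hvB)
  have hABne : A ≠ B := by
    intro h
    exact hv0Q (hBsub v₀ (h ▸ hv0A))
  exact ⟨a', b', A, B, hA, hB, hab, hdisj, hABne, hv0A, hAsub, hBsub⟩

lemma uniq_core (hN : N.Level1) {Y : Set X} {u w : V}
    (hYc : N.CommonAncestor Y u) (hw : N.IsLSA Y w)
    {p q : List V} (hp : DP N.Adj p w u) (hq : DP N.Adj q w u)
    {v₀ : V} (h1 : v₀ ∈ p) (h2 : v₀ ∉ q) : False := by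
  have hac := N.acyclic
  obtain ⟨a', β, A, B, hA, hB, hab, hdisj, hABne, hv₀A, hAp, hBq⟩ := extract N hp hq h1 h2
  obtain ⟨C, hCcyc, hCmem⟩ := make_cycle N hA hB hab hdisj hABne
  have hβA : β ∈ A := hA.end_mem
  have ha'p : a' ∈ p := hAp a' hA.start_mem
  have hwa' : ReflTransGen N.Adj w a' := (hp.mem_reaches ha'p).1
  have ha'β : ReflTransGen N.Adj a' β := (hA.mem_reaches hβA).1
  have hwβ : ReflTransGen N.Adj w β := hwa'.trans ha'β
  have hβu : ReflTransGen N.Adj β u := (hp.mem_reaches (hAp β hβA)).2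
  have htgab : TransGen N.Adj a' β := by
    obtain ⟨A₁, hAeq⟩ := aux_head_eq hA.head
    have hch := hA.chain; rw [hAeq] at hch
    refine aux_chain_tg hch β ?_
    have hm := hβA; rw [hAeq] at hm
    rcases List.mem_cons.mp hm with h | h
    · exact absurd h.symm hab
    · exact h
  have hβw : β ≠ w := by
    rintro rfl
    exact hac a' (htgab.trans_left hwa')
  have hstab : N.StableAncestor Y β := by
    intro x' hx' P hPdi
    by_contra hβP
    have hwP : w ∈ P := hw.1 x' hx' P hPdi
    have hPdi' : DP N.Adj P N.root (N.leaf x') := hPdi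
    obtain ⟨S, hS, hSsub⟩ := DP.suffix_from hPdi' hwP
    have hβS : β ∉ S := fun h => hβP (hSsub β h)
    obtain ⟨D₁, hD₁⟩ := exists_DP hac hwβ
    have hβlx : ReflTransGen N.Adj β (N.leaf x') := hβu.trans (hYc hx')
    obtain ⟨D₂, hD₂⟩ := exists_DP hac hβlx
    obtain ⟨hT, hTmem⟩ := DP.append hac hD₁ hD₂
    have hβT : β ∈ D₁ ++ D₂.tail := (hTmem β).mpr (Or.inl hD₁.end_mem)
    obtain ⟨a₁, b₁, A₁, B₁, hA₁, hB₁, hab₁, hdisj₁, hABne₁, hβA₁, hA₁T, hB₁S⟩ :=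
      extract N hT hS hβT hβS
    obtain ⟨C₂, hC₂cyc, hC₂mem⟩ := make_cycle N hA₁ hB₁ hab₁ hdisj₁ hABne₁
    have hβC : β ∈ C.support := (hCmem β).mpr (Or.inl hβA)
    have hβC₂ : β ∈ C₂.support := (hC₂mem β).mpr (Or.inl hβA₁)
    have hiff := hN.2 a' a₁ C C₂ hCcyc hC₂cyc β hβC hβC₂
    have hb₁C₂ : b₁ ∈ C₂.support := (hC₂mem b₁).mpr (Or.inr hB₁.end_mem)
    have hb₁C : b₁ ∈ C.support := (hiff b₁).mpr hb₁C₂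
    have hb₁β : ReflTransGen N.Adj b₁ β := by
      rcases (hCmem b₁).mp hb₁C with h | h
      · exact (hA.mem_reaches h).2
      · exact (hB.mem_reaches h).2
    have hβb₁ : ReflTransGen N.Adj β b₁ := (hA₁.mem_reaches hβA₁).2
    have hneq : b₁ ≠ β := by
      rintro rfl
      exact hβS (hB₁S b₁ hB₁.end_mem)
    exact aux_no2 hac hβb₁ hb₁β (Ne.symm hneq)
  have hβbeloww := hw.2 β hstab
  exact aux_no2 hac hwβ hβbeloww (Ne.symm hβw)

end NetLemmas

/-- In a level-1 phylogenetic network `N` on a finite set `X`, for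
every nonempty subset `Y` of `X` with unique lowest common ancestor `lca(Y)`
and lowest stable ancestor `lsa(Y)`: either `lsa(Y) = lca(Y)`, or there exists
a unique directed path from `lsa(Y)` to `lca(Y)`, and this path contains no
cut arc. -/
theorem lsa_eq_lca_or_unique_dipath {V X : Type} [Fintype V] [Fintype X]
    (N : PhyloNetwork V X) (hN : N.Level1) (Y : Set X) (hY : Y.Nonempty)
    (u w : V) (hu : N.IsLCA Y u) (hu' : ∀ v, N.IsLCA Y v → v = u)
    (hw : N.IsLSA Y w) :
    w = u ∨ ((∃! p : List V, N.IsDipath p w u) ∧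
      ∀ p : List V, N.IsDipath p w u → ∀ a b, PhyloNetwork.ArcIn p a b → ¬ N.CutArc a b) := by
  classical
  have hac := N.acyclic
  obtain ⟨x, hx⟩ := hY
  by_cases hwu : w = u
  · exact Or.inl hwu
  · right
    have hCA : N.CommonAncestor Y w := by
      intro y hy
      obtain ⟨L₁, hL₁⟩ := exists_DP hac (N.root_reaches u)
      obtain ⟨L₂, hL₂⟩ := exists_DP hac (hu.1 hy)
      obtain ⟨hL, hLmem⟩ := DP.append hac hL₁ hL₂
      have hwL : w ∈ L₁ ++ L₂.tail := hw.1 y hy _ hL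
      exact (hL.mem_reaches hwL).2
    have hwu' : ReflTransGen N.Adj w u := by
      obtain ⟨L₁, hL₁⟩ := exists_DP hac (N.root_reaches u)
      obtain ⟨L₂, hL₂⟩ := exists_DP hac (hu.1 hx)
      obtain ⟨hL, hLmem⟩ := DP.append hac hL₁ hL₂
      have hwL : w ∈ L₁ ++ L₂.tail := hw.1 x hx _ hL
      rcases (hLmem w).mp hwL with h | h
      · exact (hL₁.mem_reaches h).2
      · exact absurd ⟨(hL₂.mem_reaches h).1, hwu⟩ (hu.2 w hCA)
    obtain ⟨p₀, hp₀⟩ := exists_DP hac hwu'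
    constructor
    · refine ⟨p₀, hp₀, ?_⟩
      intro q hq
      have hq' : DP N.Adj q w u := hq
      by_contra hne
      have hmem : ¬ ∀ v, v ∈ q ↔ v ∈ p₀ := fun h => hne (DP_ext hac hq' hp₀ h)
      push_neg at hmem
      obtain ⟨v₀, hv⟩ := hmem
      rcases hv with ⟨h1, h2⟩ | ⟨h1, h2⟩
      · exact uniq_core N hN hu.1 hw hq' hp₀ h1 h2
      · exact uniq_core N hN hu.1 hw hp₀ hq' h2 h1
    · intro p hp a b harc hcut
      have hp' : DP N.Adj p w u := hp
      have hbtail : b ∈ p.tail := (List.of_mem_zip harc).2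
      have hbp : b ∈ p := List.mem_of_mem_tail hbtail
      have hbw : b ≠ w := by
        obtain ⟨p₁, hpeq⟩ := aux_head_eq hp'.head
        rintro rfl
        have hnd := hp'.nodup; rw [hpeq] at hnd
        have hm := hbtail; rw [hpeq, List.tail_cons] at hm
        exact (List.nodup_cons.mp hnd).1 hm
      have hwb : ReflTransGen N.Adj w b := (hp'.mem_reaches hbp).1
      have hbu : ReflTransGen N.Adj b u := (hp'.mem_reaches hbp).2
      have hnstab : ¬ N.StableAncestor Y b := by
        intro hs
        exact aux_no2 hac hwb (hw.2 b hs) (Ne.symm hbw)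
      rw [PhyloNetwork.StableAncestor] at hnstab
      push_neg at hnstab
      obtain ⟨x', hx', P, hPdi, hbP⟩ := hnstab
      have hPdi' : DP N.Adj P N.root (N.leaf x') := hPdi
      apply hcut.2
      set G' := SimpleGraph.fromRel (fun u' v' => N.Adj u' v' ∧ ¬(u' = a ∧ v' = b)) with hG'
      have hGadj : ∀ z' z, N.Adj z' z → z ≠ b → G'.Adj z' z := by
        intro z' z hadj hzb
        have hne2 : z' ≠ z := fun h => hac z' (h ▸ TransGen.single (h ▸ hadj))
        exact (SimpleGraph.fromRel_adj _ z' z).mpr ⟨hne2, Or.inl ⟨hadj, fun hh => hzb hh.2⟩⟩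
      have Hdown : ∀ z, ReflTransGen N.Adj b z → G'.Reachable b z := by
        intro z hz
        induction hz with
        | refl => exact SimpleGraph.Reachable.refl b
        | @tail z₁ z₂ hz' hstep ih =>
          by_cases hzb : z₂ = b
          · rw [hzb]
          · exact ih.trans (hGadj _ _ hstep hzb).reachable
      have hPchain : P.Chain' G'.Adj := by
        refine aux_chain_imp hPdi'.chain ?_
        intro z' z hadj hz
        exact hGadj z' z hadj (fun h => hbP (h ▸ List.mem_of_mem_tail hz))
      have HPreach : ∀ v ∈ P, G'.Reachable N.root v := by
        intro v hv
        have hr := aux_chain_head hPchain hPdi'.head v hv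
        exact (SimpleGraph.reachable_iff_reflTransGen (G := G') _ _).mpr hr
      have HP : G'.Reachable N.root (N.leaf x') := HPreach _ hPdi'.end_mem
      have Hb : G'.Reachable N.root b :=
        HP.trans (Hdown (N.leaf x') (hbu.trans (hu.1 hx'))).symm
      have Hroot : ∀ v, G'.Reachable N.root v := by
        intro v
        have hr := N.root_reaches v
        induction hr with
        | refl => exact SimpleGraph.Reachable.refl _
        | @tail z₁ z₂ hz' hstep ih =>
          by_cases hzb : z₂ = b
          · rw [hzb]
            exact Hb
          · exact ih.trans (hGadj _ _ hstep hzb).reachable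
      exact (SimpleGraph.connected_iff_exists_forall_reachable (G := G')).mpr ⟨N.root, Hroot⟩
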